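/- Suppose that for every u ∈ U there exists a coordinate c with u[c] = v[c] = 1. Then in the 2-OV graph H(U,v,a), the eccentricity of s is exactly 2a+1, and the diameter of H(U,v,a) is at most 4a+2. -/

import Mathlib

/-!
2-OV graph `H(U,v,a)` (Theorem 3.4, "yes" case): if every `u ∈ U` shares a
coordinate `c` with `u[c] = v[c] = 1`, then the eccentricity of `s` is exactly
`2a+1` and the diameter of `H(U,v,a)` is at most `4a+2`.
-/

namespace OVConstr

variable {B P : Type*}

/-- Vertices of a graph assembled from base vertices `B` and, for each path request
`p : P` of length `L p`, the `L p - 1` internal vertices of the path. -/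
abbrev Vert (B P : Type*) (L : P → ℕ) : Type _ := B ⊕ (Σ p : P, Fin (L p - 1))

/-- `pos e0 e1 L p i z` : `z` is the `i`-th vertex along the path `p`
(whose endpoints are `e0 p` and `e1 p` and whose length is `L p`). -/
def pos (e0 e1 : P → B) (L : P → ℕ) (p : P) (i : ℕ) (z : Vert B P L) : Prop :=
  (i = 0 ∧ z = Sum.inl (e0 p)) ∨ (i = L p ∧ z = Sum.inl (e1 p)) ∨
    (∃ h : i - 1 < L p - 1, 0 < i ∧ i < L p ∧ z = Sum.inr ⟨p, ⟨i - 1, h⟩⟩)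

/-- The graph obtained from the base vertex set `B` by adding, for each `p : P`, an
internally vertex-disjoint path of length `L p` between the vertices `e0 p` and
`e1 p` (for `L p = 1` this is just an edge). -/
def pathGraph (e0 e1 : P → B) (L : P → ℕ) : SimpleGraph (Vert B P L) where
  Adj x y := x ≠ y ∧ ∃ p i, i < L p ∧
    ((pos e0 e1 L p i x ∧ pos e0 e1 L p (i + 1) y) ∨
     (pos e0 e1 L p i y ∧ pos e0 e1 L p (i + 1) x))
  symm := by
    constructor
    rintro x y ⟨hne, p, i, hi, h⟩
    exact ⟨hne.symm, p, i, hi, h.symm⟩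
  loopless := ⟨fun x h => h.1 rfl⟩

/-- Base (named) vertices of the 2-OV graph `H(U,v,a)`. -/
inductive Base (ℓ : ℕ) (U : Set (Fin ℓ → Bool)) : Type
  | s
  | cL (c : Fin ℓ)
  | cR (c : Fin ℓ)
  | uL0 (u : U)
  | uLa (u : U)
  | uR0 (u : U)
  | uRa (u : U)

/-- Path requests of the 2-OV graph `H(U,v,a)`. -/
inductive Pth (ℓ : ℕ) (U : Set (Fin ℓ → Bool)) (v : Fin ℓ → Bool) : Type
  | scL (c : Fin ℓ)                                    -- s — c_left, length 2a
  | scR (c : Fin ℓ)                                    -- s — c_right, length 2a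
  | uLpath (u : U)                                     -- u_left^0 … u_left^a, length a
  | uRpath (u : U)                                     -- u_right^0 … u_right^a, length a
  | ucL (u : U) (c : Fin ℓ) (h : u.1 c = true)         -- u_left^a — c_left, length a
  | ucR (u : U) (c : Fin ℓ) (h : u.1 c = true)         -- u_right^a — c_right, length a
  | vcL (c : Fin ℓ) (h : v c = true)                   -- edge s — c_left
  | vcR (c : Fin ℓ) (h : v c = true)                   -- edge s — c_right

variable {ℓ : ℕ} {U : Set (Fin ℓ → Bool)} {v : Fin ℓ → Bool}

/-- First endpoint of each path request. -/
def e0 : Pth ℓ U v → Base ℓ U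
  | .scL _ => .s
  | .scR _ => .s
  | .uLpath u => .uL0 u
  | .uRpath u => .uR0 u
  | .ucL u _ _ => .uLa u
  | .ucR u _ _ => .uRa u
  | .vcL _ _ => .s
  | .vcR _ _ => .s

/-- Second endpoint of each path request. -/
def e1 : Pth ℓ U v → Base ℓ U
  | .scL c => .cL c
  | .scR c => .cR c
  | .uLpath u => .uLa u
  | .uRpath u => .uRa u
  | .ucL _ c _ => .cL c
  | .ucR _ c _ => .cR c
  | .vcL c _ => .cL c
  | .vcR c _ => .cR c

/-- Length of each path request: the `s — c_left`/`s — c_right` paths have length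
`2a`, the `v`-edges have length `1`, all other paths have length `a`. -/
def len (a : ℕ) : Pth ℓ U v → ℕ
  | .scL _ => 2 * a
  | .scR _ => 2 * a
  | .vcL _ _ => 1
  | .vcR _ _ => 1
  | _ => a

/-- The 2-OV graph `H(U,v,a)`. -/
def H (a ℓ : ℕ) (U : Set (Fin ℓ → Bool)) (v : Fin ℓ → Bool) :
    SimpleGraph (Vert (Base ℓ U) (Pth ℓ U v) (len a)) :=
  pathGraph e0 e1 (len a)

/-- The eccentricity (in `ℕ∞`) of a vertex `z`: the supremum of the distances from
`z` to all vertices. -/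
noncomputable def ecc (a ℓ : ℕ) (U : Set (Fin ℓ → Bool)) (v : Fin ℓ → Bool)
    (z : Vert (Base ℓ U) (Pth ℓ U v) (len a)) : ℕ∞ :=
  ⨆ y, (H a ℓ U v).edist z y

end OVConstr

namespace OVConstr

section Generic

variable {B P : Type*} (f g : P → B) (L : P → ℕ)

/-- The `i`-th vertex along path `p`. -/
def vtx (p : P) (i : ℕ) : Vert B P L :=
  if h : 0 < i ∧ i < L p then Sum.inr ⟨p, ⟨i - 1, by omega⟩⟩
  else if i = 0 then Sum.inl (f p) else Sum.inl (g p)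

lemma vtx_zero (p : P) : vtx f g L p 0 = Sum.inl (f p) := by
  simp [vtx]

lemma vtx_last (p : P) (hL : 0 < L p) : vtx f g L p (L p) = Sum.inl (g p) := by
  simp [vtx, hL.ne']

lemma vtx_inr (p : P) (k : Fin (L p - 1)) :
    vtx f g L p (k.1 + 1) = Sum.inr ⟨p, k⟩ := by
  have hk := k.isLt
  have h : 0 < k.1 + 1 ∧ k.1 + 1 < L p := ⟨Nat.succ_pos _, by omega⟩
  simp only [vtx, dif_pos h]
  congr 1

lemma pos_vtx {p : P} {i : ℕ} (hi : i ≤ L p) (hL : 0 < L p) :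
    pos f g L p i (vtx f g L p i) := by
  by_cases h : 0 < i ∧ i < L p
  · exact Or.inr (Or.inr ⟨by omega, h.1, h.2, by simp [vtx, h]⟩)
  · rcases Nat.eq_zero_or_pos i with h0 | h0
    · subst h0
      exact Or.inl ⟨rfl, vtx_zero f g L p⟩
    · have hiL : i = L p := by omega
      subst hiL
      exact Or.inr (Or.inl ⟨rfl, vtx_last f g L p hL⟩)

lemma vtx_ne {p : P} (hne : f p ≠ g p) {i : ℕ} (hi : i + 1 ≤ L p) :
    vtx f g L p i ≠ vtx f g L p (i + 1) := by
  unfold vtx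
  split_ifs
  all_goals simp_all [Fin.mk.injEq]
  all_goals omega

lemma adj_vtx {p : P} (hne : f p ≠ g p) {i : ℕ} (hi : i + 1 ≤ L p) :
    (pathGraph f g L).Adj (vtx f g L p i) (vtx f g L p (i + 1)) := by
  refine ⟨vtx_ne f g L hne hi, p, i, by omega,
    Or.inl ⟨pos_vtx f g L (by omega) (by omega), pos_vtx f g L hi (by omega)⟩⟩

lemma edist_vtx_le {p : P} (hne : f p ≠ g p) {i j : ℕ} (hij : i ≤ j) (hj : j ≤ L p) :
    (pathGraph f g L).edist (vtx f g L p i) (vtx f g L p j) ≤ ((j - i : ℕ) : ℕ∞) := by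
  induction j, hij using Nat.le_induction with
  | base => simp [SimpleGraph.edist_self]
  | succ j hij ih =>
    have h1 := ih (by omega)
    have h2 : (pathGraph f g L).edist (vtx f g L p j) (vtx f g L p (j + 1)) ≤ 1 :=
      le_of_eq (SimpleGraph.edist_eq_one_iff_adj.mpr (adj_vtx f g L hne hj))
    calc (pathGraph f g L).edist (vtx f g L p i) (vtx f g L p (j + 1))
        ≤ _ + _ := SimpleGraph.edist_triangle (v := vtx f g L p j)
      _ ≤ ((j - i : ℕ) : ℕ∞) + 1 := add_le_add h1 h2
      _ = ((j + 1 - i : ℕ) : ℕ∞) := by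
          rw [show j + 1 - i = (j - i) + 1 by omega]; push_cast; rfl

/-- Triangle-inequality helper with natural-number bounds. -/
lemma edist_tri {V : Type*} (G : SimpleGraph V) {x y z : V} {m n k : ℕ}
    (h1 : G.edist x z ≤ (m : ℕ∞)) (h2 : G.edist z y ≤ (n : ℕ∞)) (h3 : m + n ≤ k) :
    G.edist x y ≤ (k : ℕ∞) :=
  le_trans (SimpleGraph.edist_triangle (v := z))
    (le_trans (add_le_add h1 h2) (by exact_mod_cast h3))

lemma edist_mono_nat {V : Type*} (G : SimpleGraph V) {x y : V} {m k : ℕ}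
    (h1 : G.edist x y ≤ (m : ℕ∞)) (h3 : m ≤ k) : G.edist x y ≤ (k : ℕ∞) :=
  le_trans h1 (by exact_mod_cast h3)

/-- A `1`-Lipschitz function is dominated by the distance. -/
lemma le_add_edist {V : Type*} (G : SimpleGraph V) (φ : V → ℕ)
    (hφ : ∀ x y, G.Adj x y → φ y ≤ φ x + 1) (x y : V) :
    (φ y : ℕ∞) ≤ (φ x : ℕ∞) + G.edist x y := by
  by_cases h : G.edist x y = ⊤
  · simp [h]
  · obtain ⟨w, hw⟩ := SimpleGraph.exists_walk_of_edist_ne_top h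
    rw [← hw]
    have key : ∀ {x y : V} (w : G.Walk x y), φ y ≤ φ x + w.length := by
      intro x y w
      induction w with
      | nil => simp
      | cons hadj w ih =>
        have := hφ _ _ hadj
        simp only [SimpleGraph.Walk.length_cons]
        omega
    exact_mod_cast key w

end Generic

section OV

variable {ℓ : ℕ} {U : Set (Fin ℓ → Bool)} {v : Fin ℓ → Bool}

/-- Intended value of the potential function at position `i` of path `p`. -/
def psi (a : ℕ) : Pth ℓ U v → ℕ → ℕ
  | .scL _, i => min i (2 * a + 1 - i)
  | .scR _, i => min i (2 * a + 1 - i)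
  | .uLpath _, i => 2 * a + 1 - i
  | .uRpath _, i => 2 * a + 1 - i
  | .ucL _ _ _, i => a + 1 - i
  | .ucR _ _ _, i => a + 1 - i
  | .vcL _ _, i => i
  | .vcR _ _, i => i

/-- Potential function: a `1`-Lipschitz lower bound for the distance from `s`. -/
def phi (a : ℕ) : Vert (Base ℓ U) (Pth ℓ U v) (len a) → ℕ
  | .inl .s => 0
  | .inl (.cL _) => 1
  | .inl (.cR _) => 1
  | .inl (.uLa _) => a + 1
  | .inl (.uRa _) => a + 1
  | .inl (.uL0 _) => 2 * a + 1
  | .inl (.uR0 _) => 2 * a + 1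
  | .inr ⟨p, k⟩ => psi a p (k.1 + 1)

lemma phi_pos {a : ℕ} (ha : 0 < a) {p : Pth ℓ U v} {i : ℕ}
    {z : Vert (Base ℓ U) (Pth ℓ U v) (len a)}
    (h : pos e0 e1 (len a) p i z) : phi a z = psi a p i := by
  rcases h with ⟨h0, rfl⟩ | ⟨hL, rfl⟩ | ⟨hlt, hpos, hiL, rfl⟩
  · subst h0
    cases p <;> simp [phi, psi, e0]
  · subst hL
    cases p <;> simp [phi, psi, e1, len] <;> omega
  · cases p <;> simp only [phi, psi, len] at hiL ⊢ <;> (try constructor) <;> omega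

lemma psi_step {a : ℕ} (ha : 0 < a) (p : Pth ℓ U v) {i : ℕ} (hi : i < len a p) :
    psi a p (i + 1) ≤ psi a p i + 1 ∧ psi a p i ≤ psi a p (i + 1) + 1 := by
  cases p <;> simp only [psi, len] at hi ⊢ <;> omega

lemma phi_lip {a : ℕ} (ha : 0 < a) {x y : Vert (Base ℓ U) (Pth ℓ U v) (len a)}
    (h : (H a ℓ U v).Adj x y) : phi a y ≤ phi a x + 1 := by
  obtain ⟨-, p, i, hi, hc⟩ := h
  rcases hc with ⟨hx, hy⟩ | ⟨hy, hx⟩ <;> rw [phi_pos ha hx, phi_pos ha hy]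
  · exact (psi_step ha p hi).1
  · exact (psi_step ha p hi).2

end OV

end OVConstr

open OVConstr in
theorem two_ov_graph_yes_case
    (a ℓ : ℕ) (ha : 0 < a) (hℓ : 0 < ℓ)
    (U : Set (Fin ℓ → Bool)) (hUfin : U.Finite) (hU : U.Nonempty)
    (hUone : ∀ u ∈ U, ∃ c, u c = true) (v : Fin ℓ → Bool)
    (hyes : ∀ u ∈ U, ∃ c, u c = true ∧ v c = true) :
    ecc a ℓ U v (Sum.inl Base.s) = ((2 * a + 1 : ℕ) : ℕ∞) ∧
      (H a ℓ U v).ediam ≤ ((4 * a + 2 : ℕ) : ℕ∞) := by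
  have hne : ∀ p : Pth ℓ U v, e0 p ≠ e1 p := by
    intro p; cases p <;> simp [e0, e1]
  have hLpos : ∀ p : Pth ℓ U v, 0 < len a p := by
    intro p; cases p <;> simp [len] <;> omega
  -- endpoint-to-endpoint distance bounds along each path
  have key : ∀ p : Pth ℓ U v,
      (H a ℓ U v).edist (Sum.inl (e0 p)) (Sum.inl (e1 p)) ≤ ((len a p : ℕ) : ℕ∞) := by
    intro p
    have h := edist_vtx_le e0 e1 (len a) (hne p) (Nat.zero_le (len a p)) le_rfl
    rwa [vtx_zero, vtx_last _ _ _ _ (hLpos p), Nat.sub_zero] at h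
  -- distance bounds to internal vertices
  have keyI : ∀ (p : Pth ℓ U v) (k : Fin (len a p - 1)),
      (H a ℓ U v).edist (Sum.inl (e0 p)) (Sum.inr ⟨p, k⟩) ≤ ((k.1 + 1 : ℕ) : ℕ∞) ∧
      (H a ℓ U v).edist (Sum.inr ⟨p, k⟩) (Sum.inl (e1 p)) ≤
        ((len a p - (k.1 + 1) : ℕ) : ℕ∞) := by
    intro p k
    have hk := k.isLt
    constructor
    · have h := edist_vtx_le e0 e1 (len a) (hne p) (Nat.zero_le (k.1 + 1)) (by omega)
      rwa [vtx_zero, vtx_inr, Nat.sub_zero] at h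
    · have h := edist_vtx_le e0 e1 (len a) (hne p)
        (show k.1 + 1 ≤ len a p by omega) le_rfl
      rwa [vtx_inr, vtx_last _ _ _ _ (hLpos p)] at h
  -- distance from s to u_left^a and u_right^a
  have hLa : ∀ u : U, (H a ℓ U v).edist (Sum.inl Base.s) (Sum.inl (Base.uLa u)) ≤
      ((a + 1 : ℕ) : ℕ∞) := by
    intro u
    obtain ⟨c, hc, hv⟩ := hyes u.1 u.2
    have h1 : (H a ℓ U v).edist (Sum.inl Base.s) (Sum.inl (Base.cL c)) ≤ ((1 : ℕ) : ℕ∞) :=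
      key (Pth.vcL c hv)
    have h2 : (H a ℓ U v).edist (Sum.inl (Base.cL c)) (Sum.inl (Base.uLa u)) ≤
        ((a : ℕ) : ℕ∞) := by
      have h := key (Pth.ucL u c hc)
      rw [SimpleGraph.edist_comm] at h
      exact h
    exact edist_tri _ h1 h2 (by omega)
  have hRa : ∀ u : U, (H a ℓ U v).edist (Sum.inl Base.s) (Sum.inl (Base.uRa u)) ≤
      ((a + 1 : ℕ) : ℕ∞) := by
    intro u
    obtain ⟨c, hc, hv⟩ := hyes u.1 u.2
    have h1 : (H a ℓ U v).edist (Sum.inl Base.s) (Sum.inl (Base.cR c)) ≤ ((1 : ℕ) : ℕ∞) :=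
      key (Pth.vcR c hv)
    have h2 : (H a ℓ U v).edist (Sum.inl (Base.cR c)) (Sum.inl (Base.uRa u)) ≤
        ((a : ℕ) : ℕ∞) := by
      have h := key (Pth.ucR u c hc)
      rw [SimpleGraph.edist_comm] at h
      exact h
    exact edist_tri _ h1 h2 (by omega)
  -- every vertex is within distance 2a+1 of s
  have hupper : ∀ y, (H a ℓ U v).edist (Sum.inl Base.s) y ≤ ((2 * a + 1 : ℕ) : ℕ∞) := by
    rintro (b | ⟨p, k⟩)
    · cases b with
      | s => simp [SimpleGraph.edist_self]
      | cL c =>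
          exact edist_mono_nat _
            (show (H a ℓ U v).edist _ _ ≤ ((2 * a : ℕ) : ℕ∞) from key (Pth.scL c))
            (by omega)
      | cR c =>
          exact edist_mono_nat _
            (show (H a ℓ U v).edist _ _ ≤ ((2 * a : ℕ) : ℕ∞) from key (Pth.scR c))
            (by omega)
      | uLa u => exact edist_mono_nat _ (hLa u) (by omega)
      | uRa u => exact edist_mono_nat _ (hRa u) (by omega)
      | uL0 u =>
          have h2 : (H a ℓ U v).edist (Sum.inl (Base.uLa u)) (Sum.inl (Base.uL0 u)) ≤
              ((a : ℕ) : ℕ∞) := by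
            have h := key (Pth.uLpath u)
            rw [SimpleGraph.edist_comm] at h
            exact h
          exact edist_tri _ (hLa u) h2 (by omega)
      | uR0 u =>
          have h2 : (H a ℓ U v).edist (Sum.inl (Base.uRa u)) (Sum.inl (Base.uR0 u)) ≤
              ((a : ℕ) : ℕ∞) := by
            have h := key (Pth.uRpath u)
            rw [SimpleGraph.edist_comm] at h
            exact h
          exact edist_tri _ (hRa u) h2 (by omega)
    · cases p with
      | scL c =>
          have hk : k.1 < 2 * a - 1 := k.isLt
          exact edist_mono_nat _ ((keyI (Pth.scL c) k).1) (by omega)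
      | scR c =>
          have hk : k.1 < 2 * a - 1 := k.isLt
          exact edist_mono_nat _ ((keyI (Pth.scR c) k).1) (by omega)
      | uLpath u =>
          have h2 : (H a ℓ U v).edist (Sum.inl (Base.uLa u)) (Sum.inr ⟨Pth.uLpath u, k⟩) ≤
              ((a - (k.1 + 1) : ℕ) : ℕ∞) := by
            have h := (keyI (Pth.uLpath u) k).2
            rw [SimpleGraph.edist_comm] at h
            exact h
          exact edist_tri _ (hLa u) h2 (by omega)
      | uRpath u =>
          have h2 : (H a ℓ U v).edist (Sum.inl (Base.uRa u)) (Sum.inr ⟨Pth.uRpath u, k⟩) ≤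
              ((a - (k.1 + 1) : ℕ) : ℕ∞) := by
            have h := (keyI (Pth.uRpath u) k).2
            rw [SimpleGraph.edist_comm] at h
            exact h
          exact edist_tri _ (hRa u) h2 (by omega)
      | ucL u c hc =>
          have hk : k.1 < a - 1 := k.isLt
          exact edist_tri _ (hLa u) ((keyI (Pth.ucL u c hc) k).1) (by omega)
      | ucR u c hc =>
          have hk : k.1 < a - 1 := k.isLt
          exact edist_tri _ (hRa u) ((keyI (Pth.ucR u c hc) k).1) (by omega)
      | vcL c hv => exact absurd k.isLt (by simp [len])
      | vcR c hv => exact absurd k.isLt (by simp [len])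
  -- lower bound: u_left^0 is at distance at least 2a+1 from s
  obtain ⟨u₀, hu₀⟩ := hU
  have hlow : ((2 * a + 1 : ℕ) : ℕ∞) ≤
      (H a ℓ U v).edist (Sum.inl Base.s) (Sum.inl (Base.uL0 ⟨u₀, hu₀⟩)) := by
    have h := le_add_edist (H a ℓ U v) (phi a) (fun x y hxy => phi_lip ha hxy)
      (Sum.inl Base.s) (Sum.inl (Base.uL0 ⟨u₀, hu₀⟩))
    simpa [phi] using h
  constructor
  · refine le_antisymm (iSup_le hupper) ?_
    exact le_trans hlow (le_iSup (fun y => (H a ℓ U v).edist (Sum.inl Base.s) y) _)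
  · refine SimpleGraph.ediam_le_of_edist_le ?_
    intro x y
    have hx : (H a ℓ U v).edist x (Sum.inl Base.s) ≤ ((2 * a + 1 : ℕ) : ℕ∞) := by
      rw [SimpleGraph.edist_comm]; exact hupper x
    exact edist_tri _ hx (hupper y) (by omega)
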